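/- (Bhatia–Davis inequality.) Let X be a real random variable and let m ≤ M be reals such that m ≤ X ≤ M almost surely. Then the variance of X satisfies Var(X) ≤ (M − E[X]) · (E[X] − m). -/

import Mathlib

open MeasureTheory ProbabilityTheory

/-- **Bhatia–Davis inequality.** Let `X` be a real random variable on a
probability space with finite second moment, and let `m ≤ M` be reals such that
`m ≤ X ≤ M` almost surely.  Then `Var(X) ≤ (M − E[X]) · (E[X] − m)`. -/
theorem stmt7 {Ω : Type*} [MeasureSpace Ω] [IsProbabilityMeasure (ℙ : Measure Ω)]
    (X : Ω → ℝ) (hX : MemLp X 2 ℙ) (m M : ℝ) (hmM : m ≤ M)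
    (hm : ∀ᵐ ω ∂ℙ, m ≤ X ω) (hM : ∀ᵐ ω ∂ℙ, X ω ≤ M) :
    variance X ℙ ≤ (M - ∫ ω, X ω ∂ℙ) * ((∫ ω, X ω ∂ℙ) - m) := by
  have hX1 : Integrable X ℙ := hX.integrable one_le_two
  have hX2 : Integrable (fun ω => X ω ^ 2) ℙ := by
    simpa using (hX.integrable_sq)
  have hprod : Integrable (fun ω => (M - X ω) * (X ω - m)) ℙ := by
    have : (fun ω => (M - X ω) * (X ω - m)) =
        fun ω => (M + m) * X ω - X ω ^ 2 - M * m := by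
      funext ω; ring
    rw [this]
    exact ((hX1.const_mul _).sub hX2).sub (integrable_const _)
  have hnn : 0 ≤ ∫ ω, (M - X ω) * (X ω - m) ∂ℙ := by
    refine integral_nonneg_of_ae ?_
    filter_upwards [hm, hM] with ω h1 h2
    exact mul_nonneg (by linarith) (by linarith)
  have hexp : ∫ ω, (M - X ω) * (X ω - m) ∂ℙ =
      (M + m) * (∫ ω, X ω ∂ℙ) - (∫ ω, X ω ^ 2 ∂ℙ) - M * m := by
    have : (fun ω => (M - X ω) * (X ω - m)) =
        fun ω => (M + m) * X ω - X ω ^ 2 - M * m := by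
      funext ω; ring
    have hint1 : Integrable (fun ω => (M + m) * X ω - X ω ^ 2) ℙ :=
      (hX1.const_mul _).sub hX2
    rw [this, integral_sub hint1 (integrable_const _),
      integral_sub (hX1.const_mul _) hX2, integral_const_mul, integral_const]
    simp
  rw [variance_eq_sub hX]
  simp only [Pi.pow_apply]
  have := hexp ▸ hnn
  nlinarith [this]
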